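/- Let [a,b] ⊂ (−1,1) and ξ a point of the open unit disk 𝔻. Define g(ξ,t) := Arg(t−ξ) − 2·Arg(t − 1/ξ̄) for t ∈ [a,b] (where the second term is omitted if ξ = 0, and Arg denotes the principal branch of the argument with Arg(0) := π). Then the total variation of g(ξ,·) on [a,b] is at most the angle ∠(ξ,[a,b]) := |Arg(a−ξ) − Arg(b−ξ)| under which [a,b] is seen from ξ. -/

import Mathlib

open Set

/-- Principal argument with the convention `Arg 0 = π`. -/
noncomputable def arg' (z : ℂ) : ℝ := if z = 0 then Real.pi else Complex.arg z

/-- Angle under which the real interval `[a,b]` is seen from `ξ`. -/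
noncomputable def ang (ξ : ℂ) (a b : ℝ) : ℝ := |arg' ((a : ℂ) - ξ) - arg' ((b : ℂ) - ξ)|

/-- `g(ξ,t) = Arg(t-ξ) - 2 Arg(t - 1/ξ̄)`, the second term being omitted when `ξ = 0`. -/
noncomputable def gfun (ξ : ℂ) (t : ℝ) : ℝ :=
  if ξ = 0 then arg' ((t : ℂ) - ξ)
  else arg' ((t : ℂ) - ξ) - 2 * arg' ((t : ℂ) - 1 / (starRingEnd ℂ ξ))

private lemma hasDerivAt_im_comp {F : ℝ → ℂ} {d : ℂ} {t : ℝ} (h : HasDerivAt F d t) :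
    HasDerivAt (fun t => (F t).im) d.im t := by
  have := Complex.imCLM.hasFDerivAt.comp_hasDerivAt t h
  rw [Complex.imCLM_apply] at this
  exact this

private lemma hasDerivAt_argw {w : ℂ} (hw : w.im ≠ 0) (t : ℝ) :
    HasDerivAt (fun t : ℝ => Complex.arg ((t : ℂ) - w))
      (w.im / Complex.normSq ((t : ℂ) - w)) t := by
  have hne : ((t : ℂ) - w).im ≠ 0 := by simpa using hw
  have hmem : ((t : ℂ) - w) ∈ Complex.slitPlane := Complex.mem_slitPlane_iff.mpr (Or.inr hne)
  have h1 : HasDerivAt (fun z : ℂ => Complex.log (z - w)) (((t : ℂ) - w)⁻¹) (t : ℂ) := by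
    have := (Complex.hasDerivAt_log hmem).comp (t : ℂ) ((hasDerivAt_id ((t : ℂ))).sub_const w)
    simp only [mul_one] at this
    exact this
  have h2 := hasDerivAt_im_comp h1.comp_ofReal
  have him : (((t : ℂ) - w)⁻¹).im = w.im / Complex.normSq ((t : ℂ) - w) := by
    rw [Complex.inv_im]
    congr 1
    simp
  simpa only [Complex.log_im, him] using h2

private lemma mono_sarg {w : ℂ} (hw : w.im ≠ 0) {σ : ℝ} (hσ : 0 ≤ σ * w.im) :
    Monotone (fun t : ℝ => σ * Complex.arg ((t : ℂ) - w)) := by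
  have hD : ∀ t : ℝ, HasDerivAt (fun t : ℝ => σ * Complex.arg ((t : ℂ) - w))
      (σ * (w.im / Complex.normSq ((t : ℂ) - w))) t :=
    fun t => (hasDerivAt_argw hw t).const_mul σ
  have hdiff : Differentiable ℝ (fun t : ℝ => σ * Complex.arg ((t : ℂ) - w)) :=
    fun t => (hD t).differentiableAt
  apply monotone_of_deriv_nonneg hdiff
  intro x
  rw [(hD x).deriv, ← mul_div_assoc]
  exact div_nonneg hσ (Complex.normSq_nonneg _)

private lemma mono_part {a b : ℝ} (h1 : -1 < a) (h2 : b < 1) {ξ : ℂ} (hξn : ‖ξ‖ < 1)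
    (hi : ξ.im ≠ 0) {σ : ℝ} (hσ : 0 ≤ σ * ξ.im) :
    MonotoneOn (fun t : ℝ => σ * (Complex.arg ((t : ℂ) - ξ)
      - Complex.arg ((t : ℂ) - 1 / (starRingEnd ℂ ξ)))) (Icc a b) := by
  set w : ℂ := 1 / (starRingEnd ℂ ξ) with hw
  have hξ0 : ξ ≠ 0 := fun h => hi (by simp [h])
  have hn : 0 < Complex.normSq ξ := Complex.normSq_pos.mpr hξ0
  have hcne : (starRingEnd ℂ ξ) ≠ 0 := (map_ne_zero _).mpr hξ0
  have hwim : w.im = ξ.im / Complex.normSq ξ := by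
    simp [hw, one_div, Complex.inv_im, Complex.normSq_conj]
  have hwim0 : w.im ≠ 0 := by rw [hwim]; exact div_ne_zero hi hn.ne'
  have hD : ∀ t : ℝ, HasDerivAt (fun t : ℝ => σ * (Complex.arg ((t : ℂ) - ξ)
      - Complex.arg ((t : ℂ) - w)))
      (σ * (ξ.im / Complex.normSq ((t : ℂ) - ξ) - w.im / Complex.normSq ((t : ℂ) - w))) t :=
    fun t => ((hasDerivAt_argw hi t).sub (hasDerivAt_argw hwim0 t)).const_mul σ
  have hdiff : Differentiable ℝ (fun t : ℝ => σ * (Complex.arg ((t : ℂ) - ξ)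
      - Complex.arg ((t : ℂ) - w))) := fun t => (hD t).differentiableAt
  apply monotoneOn_of_deriv_nonneg (convex_Icc a b) hdiff.continuous.continuousOn
    hdiff.differentiableOn
  intro x hx
  rw [interior_Icc] at hx
  have hx1 : -1 < x := h1.trans hx.1
  have hx2 : x < 1 := hx.2.trans h2
  rw [(hD x).deriv]
  have himA : ((x : ℂ) - ξ).im ≠ 0 := by simpa using hi
  have hnA : 0 < Complex.normSq ((x : ℂ) - ξ) :=
    Complex.normSq_pos.mpr (fun h0 => himA (by simp [h0]))
  have hmul : Complex.normSq ξ * Complex.normSq ((x : ℂ) - w) =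
      Complex.normSq ((starRingEnd ℂ ξ) * x - 1) := by
    rw [← Complex.normSq_conj ξ, ← Complex.normSq_mul]
    congr 1
    rw [hw, mul_sub, mul_one_div_cancel hcne]
  have hb : Complex.normSq ξ < 1 := by
    have h := Complex.normSq_eq_norm_sq ξ
    nlinarith [norm_nonneg ξ]
  have hid : Complex.normSq ((starRingEnd ℂ ξ) * x - 1) - Complex.normSq ((x : ℂ) - ξ) =
      (1 - x ^ 2) * (1 - Complex.normSq ξ) := by
    simp [Complex.normSq_apply, Complex.mul_re, Complex.mul_im]
    ring
  have hkge : Complex.normSq ((x : ℂ) - ξ) ≤ Complex.normSq ((starRingEnd ℂ ξ) * x - 1) := by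
    have hnn : (0:ℝ) ≤ (1 - x ^ 2) * (1 - Complex.normSq ξ) :=
      mul_nonneg (by nlinarith) (by linarith)
    linarith
  have hB : w.im / Complex.normSq ((x : ℂ) - w) =
      ξ.im / Complex.normSq ((starRingEnd ℂ ξ) * x - 1) := by
    rw [hwim, ← hmul, div_div]
  rw [hB]
  have h9 : σ * (ξ.im / Complex.normSq ((x : ℂ) - ξ)
      - ξ.im / Complex.normSq ((starRingEnd ℂ ξ) * x - 1)) =
      (σ * ξ.im) * (1 / Complex.normSq ((x : ℂ) - ξ)
        - 1 / Complex.normSq ((starRingEnd ℂ ξ) * x - 1)) := by ring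
  rw [h9]
  exact mul_nonneg hσ (sub_nonneg.mpr (one_div_le_one_div_of_le hnA hkge))

private lemma evar_le_of_dominates {f g : ℝ → ℝ} {a b : ℝ} (hab : a ≤ b)
    (h : ∀ ⦃s t : ℝ⦄, s ∈ Icc a b → t ∈ Icc a b → s ≤ t → |g t - g s| ≤ f t - f s) :
    eVariationOn g (Icc a b) ≤ ENNReal.ofReal (f b - f a) := by
  apply iSup_le
  rintro ⟨n, ⟨u, hu, us⟩⟩
  have hma : a ∈ Icc a b := left_mem_Icc.mpr hab
  have hmb : b ∈ Icc a b := right_mem_Icc.mpr hab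
  calc (∑ i ∈ Finset.range n, edist (g (u (i + 1))) (g (u i)))
      ≤ ∑ i ∈ Finset.range n, ENNReal.ofReal (f (u (i + 1)) - f (u i)) := by
        apply Finset.sum_le_sum
        intro i _
        rw [edist_dist, Real.dist_eq]
        exact ENNReal.ofReal_le_ofReal (h (us i) (us (i + 1)) (hu (Nat.le_succ _)))
    _ = ENNReal.ofReal (∑ i ∈ Finset.range n, (f (u (i + 1)) - f (u i))) := by
        rw [ENNReal.ofReal_sum_of_nonneg]
        intro i _
        exact le_trans (abs_nonneg _) (h (us i) (us (i + 1)) (hu (Nat.le_succ _)))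
    _ = ENNReal.ofReal (f (u n) - f (u 0)) := by rw [Finset.sum_range_sub fun i => f (u i)]
    _ ≤ ENNReal.ofReal (f b - f a) := by
        apply ENNReal.ofReal_le_ofReal
        have h1 := le_trans (abs_nonneg _) (h (us n) hmb (us n).2)
        have h2 := le_trans (abs_nonneg _) (h hma (us 0) (us 0).1)
        linarith

private lemma arg'_ofReal (x : ℝ) : arg' (x : ℂ) = if x ≤ 0 then Real.pi else 0 := by
  rw [arg']
  by_cases h0 : x = 0
  · simp [h0]
  · rw [if_neg (by exact_mod_cast h0)]
    rcases lt_or_gt_of_ne h0 with h | h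
    · rw [Complex.arg_ofReal_of_neg h, if_pos h.le]
    · rw [Complex.arg_ofReal_of_nonneg h.le, if_neg (not_le.mpr h)]

private lemma arg'_eq {z : ℂ} (hz : z.im ≠ 0) : arg' z = Complex.arg z :=
  if_neg (fun h => hz (by simp [h]))

/-- for `[a,b] ⊂ (-1,1)` and `ξ` in the open unit disk, the total variation
of `g(ξ,·)` on `[a,b]` is at most the angle `∠(ξ,[a,b])`. -/
theorem stmt1 (a b : ℝ) (ξ : ℂ) (h1 : -1 < a) (hab : a ≤ b) (h2 : b < 1) (hξ : ‖ξ‖ < 1) :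
    eVariationOn (gfun ξ) (Icc a b) ≤ ENNReal.ofReal (ang ξ a b) := by
  have hma : a ∈ Icc a b := left_mem_Icc.mpr hab
  have hmb : b ∈ Icc a b := right_mem_Icc.mpr hab
  by_cases hi : ξ.im = 0
  · -- real case: `gfun ξ` differs from `arg'(·-ξ)` by a constant on `[a,b]`, and is antitone
    have hr : ξ = ((ξ.re : ℝ) : ℂ) := Complex.ext (by simp) (by simp [hi])
    have habs : |ξ.re| < 1 := by
      calc |ξ.re| ≤ ‖ξ‖ := Complex.abs_re_le_norm ξ
        _ < 1 := hξ
    have hA : ∀ t : ℝ, arg' ((t : ℂ) - ξ) = if t - ξ.re ≤ 0 then Real.pi else 0 := by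
      intro t
      have he : (t : ℂ) - ξ = ((t - ξ.re : ℝ) : ℂ) := by
        conv_lhs => rw [hr]
        push_cast
        ring
      rw [he, arg'_ofReal]
    have hanti : ∀ s t : ℝ, s ≤ t → arg' ((t : ℂ) - ξ) ≤ arg' ((s : ℂ) - ξ) := by
      intro s t hst
      rw [hA, hA]
      split_ifs with h h'
      · exact le_refl _
      · exact absurd (by linarith : s - ξ.re ≤ 0) h'
      · exact Real.pi_pos.le
      · exact le_refl _
    have hdiffg : ∀ s t : ℝ, s ∈ Icc a b → t ∈ Icc a b →
        gfun ξ s - gfun ξ t = arg' ((s : ℂ) - ξ) - arg' ((t : ℂ) - ξ) := by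
      intro s t hs ht
      by_cases h0 : ξ = 0
      · simp [gfun, h0]
      · have hre0 : ξ.re ≠ 0 := by
          intro h
          exact h0 (by rw [hr, h]; simp)
        have hconj : (starRingEnd ℂ ξ) = ξ := Complex.conj_eq_iff_im.mpr hi
        have hterm : ∀ u : ℝ, u ∈ Icc a b →
            arg' ((u : ℂ) - 1 / (starRingEnd ℂ ξ)) = if 0 < ξ.re then Real.pi else 0 := by
          intro u hu
          have he2 : (u : ℂ) - 1 / (starRingEnd ℂ ξ) = ((u - (ξ.re)⁻¹ : ℝ) : ℂ) := by
            rw [hconj]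
            conv_lhs => rw [hr]
            push_cast
            ring
          rw [he2, arg'_ofReal]
          rcases lt_or_gt_of_ne hre0 with h | h
          · have hinv : (ξ.re)⁻¹ < -1 := by
              have hmul : ξ.re * (ξ.re)⁻¹ = 1 := mul_inv_cancel₀ hre0
              nlinarith [abs_lt.mp habs]
            rw [if_neg (not_lt.mpr h.le), if_neg]
            push_neg
            have := hu.1
            linarith
          · have hinv : 1 < (ξ.re)⁻¹ := by
              have hmul : ξ.re * (ξ.re)⁻¹ = 1 := mul_inv_cancel₀ hre0
              nlinarith [abs_lt.mp habs]
            rw [if_pos h, if_pos]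
            have := hu.2
            linarith
        rw [gfun, gfun, if_neg h0, if_neg h0, hterm s hs, hterm t ht]
        ring
    apply le_trans (evar_le_of_dominates hab (f := fun t => -(gfun ξ t)) ?_)
    · apply ENNReal.ofReal_le_ofReal
      have : gfun ξ a - gfun ξ b = arg' ((a : ℂ) - ξ) - arg' ((b : ℂ) - ξ) := hdiffg a b hma hmb
      rw [ang]
      calc -gfun ξ b - -gfun ξ a = arg' ((a : ℂ) - ξ) - arg' ((b : ℂ) - ξ) := by linarith
        _ ≤ |arg' ((a : ℂ) - ξ) - arg' ((b : ℂ) - ξ)| := le_abs_self _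
    · intro s t hs ht hst
      have h3 : gfun ξ t - gfun ξ s = arg' ((t : ℂ) - ξ) - arg' ((s : ℂ) - ξ) := by
        have := hdiffg t s ht hs
        linarith
      have h4 : gfun ξ t - gfun ξ s ≤ 0 := by
        rw [h3]
        have := hanti s t hst
        linarith
      rw [abs_of_nonpos h4]
      show -(gfun ξ t - gfun ξ s) ≤ -gfun ξ t - -gfun ξ s
      linarith
  · -- complex case
    have hξ0 : ξ ≠ 0 := fun h => hi (by simp [h])
    set σ : ℝ := if 0 < ξ.im then 1 else -1 with hσdef
    have hσ : 0 ≤ σ * ξ.im := by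
      rcases lt_or_gt_of_ne hi with h | h
      · rw [hσdef, if_neg (not_lt.mpr h.le)]
        nlinarith
      · rw [hσdef, if_pos h]
        nlinarith
    have hσ1 : |σ| = 1 := by
      by_cases h : 0 < ξ.im <;> simp [hσdef, h]
    set w : ℂ := 1 / (starRingEnd ℂ ξ) with hw
    have hn : 0 < Complex.normSq ξ := Complex.normSq_pos.mpr hξ0
    have hwim : w.im = ξ.im / Complex.normSq ξ := by
      simp [hw, one_div, Complex.inv_im, Complex.normSq_conj]
    have hwim0 : w.im ≠ 0 := by rw [hwim]; exact div_ne_zero hi hn.ne'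
    have hσw : 0 ≤ σ * w.im := by
      rw [hwim, ← mul_div_assoc]
      exact div_nonneg hσ hn.le
    have hmf : Monotone (fun t : ℝ => σ * Complex.arg ((t : ℂ) - ξ)) := mono_sarg hi hσ
    have hmh : Monotone (fun t : ℝ => σ * Complex.arg ((t : ℂ) - w)) := mono_sarg hwim0 hσw
    have hmp : MonotoneOn (fun t : ℝ => σ * (Complex.arg ((t : ℂ) - ξ)
        - Complex.arg ((t : ℂ) - w))) (Icc a b) := mono_part h1 h2 hξ hi hσ
    have hgfun : ∀ t : ℝ, gfun ξ t =
        Complex.arg ((t : ℂ) - ξ) - 2 * Complex.arg ((t : ℂ) - w) := by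
      intro t
      rw [gfun, if_neg hξ0, ← hw, arg'_eq (by simpa using hi), arg'_eq (by simpa using hwim0)]
    apply le_trans (evar_le_of_dominates hab
      (f := fun t : ℝ => σ * Complex.arg ((t : ℂ) - ξ)) ?_)
    · apply ENNReal.ofReal_le_ofReal
      rw [ang, arg'_eq (by simpa using hi : ((a : ℂ) - ξ).im ≠ 0),
        arg'_eq (by simpa using hi : ((b : ℂ) - ξ).im ≠ 0)]
      calc σ * Complex.arg ((b : ℂ) - ξ) - σ * Complex.arg ((a : ℂ) - ξ)
          = σ * (Complex.arg ((b : ℂ) - ξ) - Complex.arg ((a : ℂ) - ξ)) := by ring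
        _ ≤ |σ * (Complex.arg ((b : ℂ) - ξ) - Complex.arg ((a : ℂ) - ξ))| := le_abs_self _
        _ = |Complex.arg ((a : ℂ) - ξ) - Complex.arg ((b : ℂ) - ξ)| := by
            rw [abs_mul, hσ1, one_mul, abs_sub_comm]
    · intro s t hs ht hst
      have hf : 0 ≤ σ * Complex.arg ((t : ℂ) - ξ) - σ * Complex.arg ((s : ℂ) - ξ) :=
        sub_nonneg.mpr (hmf hst)
      have hh : 0 ≤ σ * Complex.arg ((t : ℂ) - w) - σ * Complex.arg ((s : ℂ) - w) :=
        sub_nonneg.mpr (hmh hst)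
      have hp : 0 ≤ σ * (Complex.arg ((t : ℂ) - ξ) - Complex.arg ((t : ℂ) - w))
          - σ * (Complex.arg ((s : ℂ) - ξ) - Complex.arg ((s : ℂ) - w)) :=
        sub_nonneg.mpr (hmp hs ht hst)
      show |gfun ξ t - gfun ξ s| ≤
        σ * Complex.arg ((t : ℂ) - ξ) - σ * Complex.arg ((s : ℂ) - ξ)
      rw [hgfun t, hgfun s]
      have habs9 : |Complex.arg ((t : ℂ) - ξ) - 2 * Complex.arg ((t : ℂ) - w)
          - (Complex.arg ((s : ℂ) - ξ) - 2 * Complex.arg ((s : ℂ) - w))|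
          = |σ * (Complex.arg ((t : ℂ) - ξ) - 2 * Complex.arg ((t : ℂ) - w)
          - (Complex.arg ((s : ℂ) - ξ) - 2 * Complex.arg ((s : ℂ) - w)))| := by
        rw [show σ * (Complex.arg ((t : ℂ) - ξ) - 2 * Complex.arg ((t : ℂ) - w)
          - (Complex.arg ((s : ℂ) - ξ) - 2 * Complex.arg ((s : ℂ) - w)))
          = σ * ((Complex.arg ((t : ℂ) - ξ) - 2 * Complex.arg ((t : ℂ) - w))
          - (Complex.arg ((s : ℂ) - ξ) - 2 * Complex.arg ((s : ℂ) - w))) by ring,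
          abs_mul, hσ1, one_mul]
      rw [habs9, abs_le]
      constructor <;> nlinarith [hf, hh, hp]
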